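/- Let t > 0 and let f : ℝ → ℝ be twice continuously differentiable with bounded second derivative. Then lim_{n→∞} n · ( ∫ f(x) dΓ(n, n/t)(x) − f(t) ) = (t²/2) f''(t). -/

import Mathlib

open MeasureTheory ProbabilityTheory Filter Real Set

lemma my_pdf_nonneg {a r : ℝ} (ha : 0 < a) (hr : 0 < r) (x : ℝ) :
    0 ≤ gammaPDFReal a r x := gammaPDFReal_nonneg ha hr x

lemma gamma_integral_eq {a r : ℝ} (ha : 0 < a) (hr : 0 < r) (g : ℝ → ℝ) :
    ∫ x, g x ∂(gammaMeasure a r) = ∫ x in Ioi 0, gammaPDFReal a r x * g x := by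
  have hmeas : Measurable (fun x => (gammaPDFReal a r x).toNNReal) :=
    (measurable_gammaPDFReal a r).real_toNNReal
  have h1 : ∫ x, g x ∂(gammaMeasure a r) = ∫ x, gammaPDFReal a r x * g x := by
    rw [gammaMeasure]
    have : gammaPDF a r = fun x => ((gammaPDFReal a r x).toNNReal : ENNReal) := rfl
    rw [this, integral_withDensity_eq_integral_smul hmeas]
    refine integral_congr_ae (.of_forall fun x => ?_)
    simp [NNReal.smul_def, Real.coe_toNNReal _ (gammaPDFReal_nonneg ha hr x)]
  rw [h1, ← integral_Ici_eq_integral_Ioi,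
    setIntegral_eq_integral_of_forall_compl_eq_zero (fun x hx => ?_)]
  simp only [mem_Ici, not_le] at hx
  simp [gammaPDFReal, not_le.mpr hx]

lemma gamma_integrable_iff {a r : ℝ} (ha : 0 < a) (hr : 0 < r) (g : ℝ → ℝ) :
    Integrable g (gammaMeasure a r) ↔
      Integrable (fun x => gammaPDFReal a r x * g x) := by
  have hmeas : Measurable (fun x => (gammaPDFReal a r x).toNNReal) :=
    (measurable_gammaPDFReal a r).real_toNNReal
  rw [gammaMeasure]
  have : gammaPDF a r = fun x => ((gammaPDFReal a r x).toNNReal : ENNReal) := rfl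
  rw [this, integrable_withDensity_iff_integrable_smul hmeas]
  apply integrable_congr
  refine .of_forall fun x => ?_
  simp [NNReal.smul_def, Real.coe_toNNReal _ (gammaPDFReal_nonneg ha hr x)]
lemma pdf_mul_pow_eqOn {a r : ℝ} (k : ℕ) :
    EqOn (fun x => gammaPDFReal a r x * x ^ k)
      (fun x => r ^ a / Real.Gamma a * (x ^ (a + k - 1) * Real.exp (-r * x ^ (1:ℝ))))
      (Ioi 0) := by
  intro x hx
  have hx0 : (0:ℝ) < x := hx
  simp only [gammaPDFReal, if_pos hx0.le, Real.rpow_one]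
  rw [← Real.rpow_natCast x k, mul_comm (r ^ a / Real.Gamma a * x ^ (a-1)) (Real.exp _),
    ← mul_assoc, mul_assoc _ _ (x ^ (k:ℝ)), ← Real.rpow_add hx0]
  ring_nf

lemma pdf_mul_pow_integrable {a r : ℝ} (ha : 0 < a) (hr : 0 < r) (k : ℕ) :
    Integrable (fun x => gammaPDFReal a r x * x ^ k) := by
  have hsupp : Function.support (fun x => gammaPDFReal a r x * x ^ k) ⊆ Ici 0 := by
    intro x hx
    by_contra h
    simp only [mem_Ici, not_le] at h
    apply hx
    simp [gammaPDFReal, not_le.mpr h]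
  rw [← integrableOn_iff_integrable_of_support_subset hsupp,
    integrableOn_Ici_iff_integrableOn_Ioi]
  refine IntegrableOn.congr_fun ?_ (pdf_mul_pow_eqOn k).symm measurableSet_Ioi
  exact ((integrableOn_rpow_mul_exp_neg_mul_rpow (by linarith : (-1:ℝ) < a + k - 1)
    zero_lt_one hr).const_mul _)

lemma gamma_moment {a r : ℝ} (ha : 0 < a) (hr : 0 < r) (k : ℕ) :
    ∫ x, x ^ k ∂(gammaMeasure a r) = Real.Gamma (a + k) / (Real.Gamma a * r ^ (k:ℝ)) := by
  rw [gamma_integral_eq ha hr, setIntegral_congr_fun measurableSet_Ioi (pdf_mul_pow_eqOn k)]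
  rw [integral_const_mul]
  have h1 : ∀ x ∈ Ioi (0:ℝ), x ^ (a + k - 1) * Real.exp (-r * x ^ (1:ℝ))
      = x ^ (a + (k:ℝ) - 1) * Real.exp (-(r * x)) := by
    intro x hx; rw [Real.rpow_one]; ring_nf
  rw [setIntegral_congr_fun measurableSet_Ioi h1,
    integral_rpow_mul_exp_neg_mul_Ioi (by positivity) hr]
  rw [Real.div_rpow zero_le_one hr.le, Real.one_rpow, Real.rpow_add hr]
  have hGa : Real.Gamma a ≠ 0 := (Real.Gamma_pos_of_pos ha).ne'
  have hra : (0:ℝ) < r ^ a := Real.rpow_pos_of_pos hr a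
  have hrk : (0:ℝ) < r ^ (k:ℝ) := Real.rpow_pos_of_pos hr _
  field_simp

lemma Gamma_add_nat {a : ℝ} (ha : 0 < a) (k : ℕ) :
    Real.Gamma (a + k) = Real.Gamma a * ∏ i ∈ Finset.range k, (a + i) := by
  induction k with
  | zero => simp
  | succ m ih =>
    have h1 : a + (m + 1 : ℕ) = (a + m) + 1 := by push_cast; ring
    rw [h1, Real.Gamma_add_one (by positivity), ih, Finset.prod_range_succ]
    ring

lemma gamma_moment_prod {a r : ℝ} (ha : 0 < a) (hr : 0 < r) (k : ℕ) :
    ∫ x, x ^ k ∂(gammaMeasure a r)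
      = (∏ i ∈ Finset.range k, (a + i)) / r ^ k := by
  rw [gamma_moment ha hr, Real.rpow_natCast, Gamma_add_nat ha,
    mul_comm (Real.Gamma a)]
  have h0 : Real.Gamma a ≠ 0 := (Real.Gamma_pos_of_pos ha).ne'
  have hrk : r ^ k ≠ 0 := by positivity
  field_simp

lemma integrable_pow_gamma {a r : ℝ} (ha : 0 < a) (hr : 0 < r) (k : ℕ) :
    Integrable (fun x : ℝ => x ^ k) (gammaMeasure a r) :=
  (gamma_integrable_iff ha hr _).mpr (pdf_mul_pow_integrable ha hr k)

lemma integrable_sub_pow_gamma {a r : ℝ} (ha : 0 < a) (hr : 0 < r) (t : ℝ) (k : ℕ) :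
    Integrable (fun x : ℝ => (x - t) ^ k) (gammaMeasure a r) := by
  have h : (fun x : ℝ => (x - t) ^ k)
      = fun x => ∑ i ∈ Finset.range (k + 1), (k.choose i : ℝ) * (-t) ^ (k - i) * x ^ i := by
    funext x
    rw [sub_eq_add_neg, add_pow]
    exact Finset.sum_congr rfl fun i _ => by ring
  rw [h]
  exact integrable_finset_sum _ fun i _ =>
    ((integrable_pow_gamma ha hr i).const_mul _)

lemma gamma_central_sum {a r : ℝ} (ha : 0 < a) (hr : 0 < r) (t : ℝ) (k : ℕ) :
    ∫ x, (x - t) ^ k ∂(gammaMeasure a r)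
      = ∑ i ∈ Finset.range (k + 1),
          (k.choose i : ℝ) * (-t) ^ (k - i) * ((∏ j ∈ Finset.range i, (a + j)) / r ^ i) := by
  have h : (fun x : ℝ => (x - t) ^ k)
      = fun x => ∑ i ∈ Finset.range (k + 1), (k.choose i : ℝ) * (-t) ^ (k - i) * x ^ i := by
    funext x
    rw [sub_eq_add_neg, add_pow]
    exact Finset.sum_congr rfl fun i _ => by ring
  rw [h, integral_finset_sum _ fun i _ => ((integrable_pow_gamma ha hr i).const_mul _)]
  refine Finset.sum_congr rfl fun i _ => ?_
  rw [integral_const_mul, gamma_moment_prod ha hr]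

lemma gamma_central_one {n : ℕ} (hn : 1 ≤ n) {t : ℝ} (ht : 0 < t) :
    ∫ x, (x - t) ∂(gammaMeasure n ((n:ℝ)/t)) = 0 := by
  have hn' : (0:ℝ) < n := by exact_mod_cast hn
  have hr : (0:ℝ) < n / t := by positivity
  have := gamma_central_sum hn' hr t 1
  simp only [pow_one] at this
  rw [this]
  norm_num [Finset.sum_range_succ, Finset.prod_range_succ, Nat.choose]
  field_simp
  ring

lemma gamma_central_two {n : ℕ} (hn : 1 ≤ n) {t : ℝ} (ht : 0 < t) :
    ∫ x, (x - t) ^ 2 ∂(gammaMeasure n ((n:ℝ)/t)) = t ^ 2 / n := by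
  have hn' : (0:ℝ) < n := by exact_mod_cast hn
  have hr : (0:ℝ) < n / t := by positivity
  rw [gamma_central_sum hn' hr t 2]
  norm_num [Finset.sum_range_succ, Finset.prod_range_succ, Nat.choose]
  field_simp
  ring

lemma gamma_central_four {n : ℕ} (hn : 1 ≤ n) {t : ℝ} (ht : 0 < t) :
    ∫ x, (x - t) ^ 4 ∂(gammaMeasure n ((n:ℝ)/t)) = t ^ 4 * (3 * n + 6) / n ^ 3 := by
  have hn' : (0:ℝ) < n := by exact_mod_cast hn
  have hr : (0:ℝ) < n / t := by positivity
  rw [gamma_central_sum hn' hr t 4]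
  norm_num [Finset.sum_range_succ, Finset.prod_range_succ, Nat.choose]
  field_simp
  ring

lemma quad_bound {f : ℝ → ℝ} (hf : ContDiff ℝ 2 f) (t x ε : ℝ)
    (h : ∀ y ∈ uIcc t x, |iteratedDeriv 2 f y - iteratedDeriv 2 f t| ≤ ε) :
    |f x - f t - deriv f t * (x - t) - iteratedDeriv 2 f t * (x - t) ^ 2 / 2|
      ≤ ε * (x - t) ^ 2 := by
  set c := iteratedDeriv 2 f t with hc
  set b := deriv f t with hb
  have hd : Differentiable ℝ f := hf.differentiable two_ne_zero
  have hf' : ContDiff ℝ 1 (deriv f) := by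
    have := (contDiff_succ_iff_deriv (n := 1)).mp (by exact_mod_cast hf)
    exact this.2.2
  have hd2 : Differentiable ℝ (deriv f) := hf'.differentiable one_ne_zero
  have hiter : iteratedDeriv 2 f = deriv (deriv f) := by
    rw [iteratedDeriv_succ, iteratedDeriv_one]
  set g1 : ℝ → ℝ := fun y => deriv f y - b - c * (y - t) with hg1
  set g : ℝ → ℝ := fun y => f y - f t - b * (y - t) - c * (y - t) ^ 2 / 2 with hg
  have hg1deriv : ∀ y, HasDerivAt g1 (iteratedDeriv 2 f y - c) y := by
    intro y
    have h1 : HasDerivAt (deriv f) (iteratedDeriv 2 f y) y := by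
      rw [hiter]; exact (hd2 y).hasDerivAt
    have h2 : HasDerivAt (fun y => c * (y - t)) c y := by
      simpa using ((hasDerivAt_id y).sub_const t).const_mul c
    exact (h1.sub_const b).sub h2
  have hgderiv : ∀ y, HasDerivAt g (g1 y) y := by
    intro y
    have h1 : HasDerivAt f (deriv f y) y := (hd y).hasDerivAt
    have h2 : HasDerivAt (fun y => b * (y - t)) b y := by
      simpa using ((hasDerivAt_id y).sub_const t).const_mul b
    have h3 : HasDerivAt (fun y => c * (y - t) ^ 2 / 2) (c * (y - t)) y := by
      have := (((hasDerivAt_id y).sub_const t).pow 2).const_mul c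
      have h4 := this.div_const 2
      refine h4.congr_deriv ?_
      rw [show (2:ℕ) - 1 = 1 from rfl]; simp only [id]; ring
    exact ((h1.sub_const (f t)).sub h2).sub h3
  have hε : 0 ≤ ε := by simpa [hc] using h t left_mem_uIcc
  have key1 : ∀ y ∈ uIcc t x, ‖g1 y‖ ≤ ε * |x - t| := by
    intro y hy
    have := Convex.norm_image_sub_le_of_norm_hasDerivWithin_le
      (f := g1) (f' := fun y => iteratedDeriv 2 f y - c) (C := ε) (s := uIcc t x)
      (fun z hz => (hg1deriv z).hasDerivWithinAt)
      (fun z hz => by rw [Real.norm_eq_abs]; exact h z hz)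
      (convex_uIcc t x) left_mem_uIcc hy
    have hg1t : g1 t = 0 := by simp [hg1, hb]
    rw [hg1t, sub_zero] at this
    have hyx : |y - t| ≤ |x - t| := by
      have h1 := neg_abs_le (x - t); have h2 := le_abs_self (x - t)
      have h3 := abs_nonneg (x - t)
      rcases mem_uIcc.mp hy with ⟨ha', hb'⟩ | ⟨ha', hb'⟩ <;>
        exact abs_le.mpr ⟨by linarith, by linarith⟩
    calc ‖g1 y‖ ≤ ε * ‖y - t‖ := this
    _ ≤ ε * |x - t| := by rw [Real.norm_eq_abs]; exact mul_le_mul_of_nonneg_left hyx hε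
  have key2 := Convex.norm_image_sub_le_of_norm_hasDerivWithin_le
      (f := g) (f' := g1) (C := ε * |x - t|) (s := uIcc t x)
      (fun z hz => (hgderiv z).hasDerivWithinAt) key1
      (convex_uIcc t x) left_mem_uIcc right_mem_uIcc
  have hgt : g t = 0 := by simp [hg]
  rw [hgt, sub_zero, Real.norm_eq_abs, Real.norm_eq_abs] at key2
  calc |g x| ≤ ε * |x - t| * |x - t| := key2
  _ = ε * (x - t) ^ 2 := by rw [mul_assoc, ← abs_mul, ← sq, abs_sq]

/-- First-order randomisation error: for `t > 0` and `f` of class `C²` with bounded second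
derivative, `n (∫ f dΓ(n,n/t) - f(t)) → (t²/2) f''(t)` as `n → ∞`. -/
theorem gamma_randomisation_first_order (t : ℝ) (ht : 0 < t) (f : ℝ → ℝ)
    (hf : ContDiff ℝ 2 f)
    (hf_bdd : ∃ M : ℝ, ∀ x : ℝ, |iteratedDeriv 2 f x| ≤ M) :
    Tendsto (fun n : ℕ =>
        (n : ℝ) * ((∫ x, f x ∂(gammaMeasure n ((n : ℝ) / t))) - f t))
      atTop (nhds (t ^ 2 / 2 * iteratedDeriv 2 f t)) := by
  obtain ⟨M, hM⟩ := hf_bdd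
  set c : ℝ := iteratedDeriv 2 f t with hc
  set b : ℝ := deriv f t with hb
  set R : ℝ → ℝ := fun x => f x - f t - b * (x - t) - c * (x - t) ^ 2 / 2 with hR
  have hM0 : 0 ≤ M := le_trans (abs_nonneg _) (hM t)
  set C : ℝ := M + |c| with hC
  have hC0 : 0 ≤ C := by positivity
  have hRglob : ∀ x, |R x| ≤ C * (x - t) ^ 2 := fun x =>
    quad_bound hf t x C fun y _ =>
      (abs_sub _ _).trans (add_le_add (hM y) le_rfl)
  have hRcont : Continuous R := by
    have h1 : Continuous f := hf.continuous
    fun_prop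
  have key : ∀ n : ℕ, 1 ≤ n →
      (n : ℝ) * ((∫ x, f x ∂(gammaMeasure n ((n : ℝ) / t))) - f t) - t ^ 2 / 2 * c
        = (n : ℝ) * ∫ x, R x ∂(gammaMeasure n ((n : ℝ) / t)) := by
    intro n hn
    have hn' : (0:ℝ) < n := by exact_mod_cast hn
    have hr : (0:ℝ) < (n:ℝ) / t := by positivity
    set μ := gammaMeasure n ((n:ℝ)/t) with hμ
    have : IsProbabilityMeasure μ := isProbabilityMeasure_gammaMeasure hn' hr
    have hi1 : Integrable (fun x : ℝ => x - t) μ := by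
      simpa using integrable_sub_pow_gamma hn' hr t 1
    have hi2 : Integrable (fun x : ℝ => (x - t) ^ 2) μ := integrable_sub_pow_gamma hn' hr t 2
    have hiR : Integrable R μ := by
      refine Integrable.mono' (hi2.const_mul C) hRcont.aestronglyMeasurable
        (.of_forall fun x => ?_)
      rw [Real.norm_eq_abs]; exact hRglob x
    have hia : Integrable (fun x : ℝ => f t + b * (x - t)) μ :=
      (integrable_const _).add (hi1.const_mul b)
    have hiq : Integrable (fun x : ℝ => c / 2 * (x - t) ^ 2) μ := hi2.const_mul (c/2)
    have hiaq : Integrable (fun x : ℝ => (f t + b * (x - t)) + c / 2 * (x - t) ^ 2) μ :=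
      hia.add hiq
    have hsplit : ∫ x, f x ∂μ
        = (∫ x, R x ∂μ) + ((f t + b * ∫ x, (x - t) ∂μ) + c / 2 * ∫ x, (x - t) ^ 2 ∂μ) := by
      have h1 : (fun x => f x)
          = fun x => R x + ((f t + b * (x - t)) + c / 2 * (x - t) ^ 2) := by
        funext x; simp only [hR]; ring
      rw [h1, integral_add hiR hiaq, integral_add hia hiq,
        integral_add (integrable_const (f t)) (hi1.const_mul b),
        integral_const, integral_const_mul, integral_const_mul]
      simp [measure_univ]
    rw [hsplit, gamma_central_one hn ht, gamma_central_two hn ht]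
    field_simp
    ring
  have herr : Tendsto (fun n : ℕ =>
      (n : ℝ) * ((∫ x, f x ∂(gammaMeasure n ((n : ℝ) / t))) - f t) - t ^ 2 / 2 * c)
      atTop (nhds 0) := by
    rw [NormedAddCommGroup.tendsto_nhds_zero]
    intro ε hε
    set ε' : ℝ := ε / (2 * (t ^ 2 + 1)) with hε'def
    have hε' : 0 < ε' := by positivity
    have hf'' : Continuous (iteratedDeriv 2 f) :=
      hf.continuous_iteratedDeriv 2 (by exact_mod_cast le_rfl)
    obtain ⟨δ, hδ0, hδ⟩ := Metric.continuousAt_iff.mp (hf''.continuousAt (x := t)) ε' hε'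
    set η : ℝ := δ / 2 with hηdef
    have hη0 : 0 < η := by positivity
    have hηprop : ∀ y : ℝ, |y - t| ≤ η → |iteratedDeriv 2 f y - c| ≤ ε' := by
      intro y hy
      have : dist y t < δ := by rw [Real.dist_eq]; rw [hηdef] at hy; linarith
      exact le_of_lt (by simpa [Real.dist_eq, hc] using hδ this)
    have hRpt : ∀ x : ℝ, |R x| ≤ ε' * (x - t) ^ 2 + C / η ^ 2 * (x - t) ^ 4 := by
      intro x
      by_cases hx : |x - t| ≤ η
      · have h1 : |R x| ≤ ε' * (x - t) ^ 2 := by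
          refine quad_bound hf t x ε' fun y hy => ?_
          have hyx : |y - t| ≤ |x - t| := by
            have h1 := neg_abs_le (x - t); have h2 := le_abs_self (x - t)
            have h3 := abs_nonneg (x - t)
            rcases mem_uIcc.mp hy with ⟨ha', hb'⟩ | ⟨ha', hb'⟩ <;>
              exact abs_le.mpr ⟨by linarith, by linarith⟩
          exact hηprop y (hyx.trans hx)
        have h2 : 0 ≤ C / η ^ 2 * (x - t) ^ 4 := by positivity
        linarith
      · push_neg at hx
        have h1 : |R x| ≤ C * (x - t) ^ 2 := hRglob x
        have hδ2 : η ^ 2 ≤ (x - t) ^ 2 := by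
          rw [← sq_abs (x - t)]
          exact pow_le_pow_left₀ hη0.le hx.le 2
        have h2 : C * (x - t) ^ 2 ≤ C / η ^ 2 * (x - t) ^ 4 := by
          rw [div_mul_eq_mul_div, le_div_iff₀ (by positivity)]
          nlinarith [mul_le_mul_of_nonneg_left hδ2 (mul_nonneg hC0 (sq_nonneg (x - t)))]
        have h3 : 0 ≤ ε' * (x - t) ^ 2 := by positivity
        exact h1.trans (h2.trans (by linarith))
    have hv : Tendsto (fun n : ℕ => C / η ^ 2 * (t ^ 4 * (3 * (n:ℝ) + 6) / (n:ℝ) ^ 2))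
        atTop (nhds 0) := by
      have h1 : Tendsto (fun n : ℕ => ((n:ℝ))⁻¹) atTop (nhds 0) :=
        tendsto_inv_atTop_nhds_zero_nat
      have h2 : Tendsto (fun n : ℕ =>
          C / η ^ 2 * (t ^ 4 * (3 * ((n:ℝ))⁻¹ + 6 * (((n:ℝ))⁻¹ * ((n:ℝ))⁻¹))))
          atTop (nhds (C / η ^ 2 * (t ^ 4 * (3 * 0 + 6 * (0 * 0))))) :=
        (((h1.const_mul 3).add ((h1.mul h1).const_mul 6)).const_mul _).const_mul _
      simp only [mul_zero, zero_mul, add_zero, zero_add] at h2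
      refine h2.congr' ?_
      filter_upwards [eventually_ge_atTop 1] with n hn
      have hn' : ((n:ℝ)) ≠ 0 := by
        have : (0:ℝ) < n := by exact_mod_cast hn
        exact this.ne'
      field_simp
    have hεt : ε' * t ^ 2 < ε / 2 := by
      rw [hε'def, div_mul_eq_mul_div, div_lt_div_iff₀ (by positivity) (by norm_num)]
      nlinarith
    filter_upwards [hv.eventually (gt_mem_nhds (half_pos hε)), eventually_ge_atTop 1]
      with n hvn hn
    rw [Real.norm_eq_abs, key n hn]
    have hn' : (0:ℝ) < n := by exact_mod_cast hn
    have hr : (0:ℝ) < (n:ℝ) / t := by positivity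
    set μ := gammaMeasure n ((n:ℝ)/t) with hμ
    have hi2 : Integrable (fun x : ℝ => (x - t) ^ 2) μ := integrable_sub_pow_gamma hn' hr t 2
    have hi4 : Integrable (fun x : ℝ => (x - t) ^ 4) μ := integrable_sub_pow_gamma hn' hr t 4
    have hiR : Integrable R μ := by
      refine Integrable.mono' (hi2.const_mul C) hRcont.aestronglyMeasurable
        (.of_forall fun x => ?_)
      rw [Real.norm_eq_abs]; exact hRglob x
    have hbd : |∫ x, R x ∂μ| ≤ ε' * (t ^ 2 / n) + C / η ^ 2 * (t ^ 4 * (3 * n + 6) / n ^ 3) := by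
      have s1 : |∫ x, R x ∂μ| ≤ ∫ x, |R x| ∂μ := by
        simpa [Real.norm_eq_abs] using norm_integral_le_integral_norm (μ := μ) R
      have s2 : ∫ x, |R x| ∂μ
          ≤ ∫ x, (ε' * (x - t) ^ 2 + C / η ^ 2 * (x - t) ^ 4) ∂μ :=
        integral_mono hiR.abs ((hi2.const_mul ε').add (hi4.const_mul (C / η ^ 2)))
          fun x => hRpt x
      have s3 : ∫ x, (ε' * (x - t) ^ 2 + C / η ^ 2 * (x - t) ^ 4) ∂μ
          = ε' * (t ^ 2 / n) + C / η ^ 2 * (t ^ 4 * (3 * n + 6) / n ^ 3) := by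
        rw [integral_add (hi2.const_mul ε') (hi4.const_mul (C / η ^ 2)),
          integral_const_mul, integral_const_mul, gamma_central_two hn ht,
          gamma_central_four hn ht]
      linarith [s1, s2, s3.le, s3.ge]
    have habs : |(n : ℝ) * ∫ x, R x ∂μ| = (n:ℝ) * |∫ x, R x ∂μ| := by
      rw [abs_mul, abs_of_nonneg hn'.le]
    rw [habs]
    have step : (n:ℝ) * |∫ x, R x ∂μ|
        ≤ ε' * t ^ 2 + C / η ^ 2 * (t ^ 4 * (3 * n + 6) / n ^ 2) := by
      have := mul_le_mul_of_nonneg_left hbd hn'.le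
      refine this.trans (le_of_eq ?_)
      field_simp
    calc (n:ℝ) * |∫ x, R x ∂μ|
        ≤ ε' * t ^ 2 + C / η ^ 2 * (t ^ 4 * (3 * n + 6) / n ^ 2) := step
      _ < ε / 2 + ε / 2 := add_lt_add hεt hvn
      _ = ε := add_halves ε
  have := herr.add_const (t ^ 2 / 2 * c)
  simpa using this
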